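/- Let A = diag(α₁,…,α_N) with α_j² distinct and nonzero, let γ be such that γ² ≠ α_j² and α_j² − γ² > 0 for all j, and let (p,q) ∈ ℝ^{2N}. Define L(λ;p,q) as the Lax matrix, D^(γ)(λ,b) = [[λ, γb],[γ b⁻¹, λ]], and the map (p̃_j, q̃_j)ᵀ = (α_j²−γ²)^{−1/2} D^(γ)(α_j,b) (p_j, q_j)ᵀ for some b ≠ 0. Then for all λ with λ² ∉ {α_j²}: L(λ;p̃,q̃)·D^(γ)(λ,b) − D^(γ)(λ,b)·L(λ;p,q) = −γ b⁻¹ P^(γ)(b;p,q)·σ₃, where P^(γ)(b;p,q) = b²L²¹(γ;p,q) + 2bL¹¹(γ;p,q) − L¹²(γ;p,q). -/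

import Mathlib

open Finset

/-- Quadratic form `Q_λ(ξ,η) = Σ_j ξ_j η_j / (λ² − α_j²)`. -/
noncomputable def Qlam {N : ℕ} (α : Fin N → ℝ) (lam : ℝ) (ξ η : Fin N → ℝ) : ℝ :=
  ∑ j, ξ j * η j / (lam ^ 2 - (α j) ^ 2)

/-- Lax matrix `L(λ;p,q)` of Eq. (2.1). -/
noncomputable def Lax {N : ℕ} (α : Fin N → ℝ) (lam : ℝ) (p q : Fin N → ℝ) :
    Matrix (Fin 2) (Fin 2) ℝ :=
  !![lam * Qlam α lam p q, 1 - Qlam α lam (fun j => α j * p j) p;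
     Qlam α lam (fun j => α j * q j) q, -(lam * Qlam α lam p q)]

/-- Darboux matrix `D^(γ)(λ,b)` (real version). -/
noncomputable def Dmat (γ lam b : ℝ) : Matrix (Fin 2) (Fin 2) ℝ := !![lam, γ * b; γ * b⁻¹, lam]

/-- The Pauli matrix σ₃. -/
def σ3 : Matrix (Fin 2) (Fin 2) ℝ := !![1, 0; 0, -1]

/-- Per-index summand of the Lax matrix. -/
noncomputable def auxM {N : ℕ} (α : Fin N → ℝ) (lam : ℝ) (p q : Fin N → ℝ) (j : Fin N) :
    Matrix (Fin 2) (Fin 2) ℝ :=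
  !![lam * (p j * q j) / (lam ^ 2 - (α j) ^ 2), -(α j * (p j * p j) / (lam ^ 2 - (α j) ^ 2));
     α j * (q j * q j) / (lam ^ 2 - (α j) ^ 2), -(lam * (p j * q j) / (lam ^ 2 - (α j) ^ 2))]

lemma lax_decomp {N : ℕ} (α : Fin N → ℝ) (lam : ℝ) (p q : Fin N → ℝ) :
    Lax α lam p q = !![0, 1; 0, 0] + ∑ j, auxM α lam p q j := by
  ext i k
  fin_cases i <;> fin_cases k <;>
    simp [Lax, auxM, Qlam, Matrix.sum_apply, Finset.mul_sum, sub_eq_add_neg,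
      ← Finset.sum_neg_distrib] <;>
    exact Finset.sum_congr rfl (fun j _ => by ring)

set_option maxHeartbeats 1000000 in
lemma key_step (a γ lam b p q pt qt : ℝ) (hb : b ≠ 0)
    (hd : lam ^ 2 - a ^ 2 ≠ 0) (hg : γ ^ 2 - a ^ 2 ≠ 0) (hs : a ^ 2 - γ ^ 2 > 0)
    (hpt : pt = (Real.sqrt (a ^ 2 - γ ^ 2))⁻¹ * (a * p + γ * b * q))
    (hqt : qt = (Real.sqrt (a ^ 2 - γ ^ 2))⁻¹ * (γ * b⁻¹ * p + a * q)) :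
    !![lam * (pt * qt) / (lam ^ 2 - a ^ 2), -(a * (pt * pt) / (lam ^ 2 - a ^ 2));
       a * (qt * qt) / (lam ^ 2 - a ^ 2), -(lam * (pt * qt) / (lam ^ 2 - a ^ 2))] * Dmat γ lam b
      - Dmat γ lam b *
        !![lam * (p * q) / (lam ^ 2 - a ^ 2), -(a * (p * p) / (lam ^ 2 - a ^ 2));
           a * (q * q) / (lam ^ 2 - a ^ 2), -(lam * (p * q) / (lam ^ 2 - a ^ 2))]
    = (-(γ * b⁻¹ * ((b ^ 2 * (a * (q * q)) + 2 * b * (γ * (p * q)) + a * (p * p))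
        / (γ ^ 2 - a ^ 2)))) • σ3 := by
  subst hpt hqt
  have h2 : (Real.sqrt (a ^ 2 - γ ^ 2))⁻¹ * (Real.sqrt (a ^ 2 - γ ^ 2))⁻¹ = (a ^ 2 - γ ^ 2)⁻¹ := by
    rw [← mul_inv, Real.mul_self_sqrt hs.le]
  have hs0 : a ^ 2 - γ ^ 2 ≠ 0 := ne_of_gt hs
  set r := (Real.sqrt (a ^ 2 - γ ^ 2))⁻¹ with hr
  have hpq : (r * (a * p + γ * b * q)) * (r * (γ * b⁻¹ * p + a * q))
      = ((a * p + γ * b * q) * (γ * b⁻¹ * p + a * q)) / (a ^ 2 - γ ^ 2) := by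
    rw [mul_mul_mul_comm, h2]; rw [div_eq_inv_mul]
  have hpp : (r * (a * p + γ * b * q)) * (r * (a * p + γ * b * q))
      = ((a * p + γ * b * q) * (a * p + γ * b * q)) / (a ^ 2 - γ ^ 2) := by
    rw [mul_mul_mul_comm, h2]; rw [div_eq_inv_mul]
  have hqq : (r * (γ * b⁻¹ * p + a * q)) * (r * (γ * b⁻¹ * p + a * q))
      = ((γ * b⁻¹ * p + a * q) * (γ * b⁻¹ * p + a * q)) / (a ^ 2 - γ ^ 2) := by
    rw [mul_mul_mul_comm, h2]; rw [div_eq_inv_mul]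
  simp only [hpq, hpp, hqq]
  ext i k
  fin_cases i <;> fin_cases k <;>
    · simp only [Dmat, σ3, Matrix.mul_apply, Matrix.sub_apply, Matrix.smul_apply,
        Fin.sum_univ_two, Matrix.cons_val', Matrix.cons_val_zero, Matrix.cons_val_one,
        Matrix.head_cons, Matrix.head_fin_const, Matrix.empty_val', Matrix.cons_val_fin_one,
        smul_eq_mul, Matrix.of_apply, Fin.zero_eta, Fin.mk_one]
      field_simp
      ring

lemma ED_comm (γ lam b : ℝ) :
    (!![0, 1; 0, 0] : Matrix (Fin 2) (Fin 2) ℝ) * Dmat γ lam b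
      - Dmat γ lam b * !![0, 1; 0, 0] = (γ * b⁻¹) • σ3 := by
  ext i k
  fin_cases i <;> fin_cases k <;>
    simp [Dmat, σ3, Matrix.mul_apply, Fin.sum_univ_two]

/-- Eq. (3.2) of Lemma 3.1: the key identity for the symplectic map `S_γ`. -/
theorem lemma31_identity {N : ℕ} (α : Fin N → ℝ) (hα : ∀ j, α j ≠ 0)
    (hαdist : ∀ j k, (α j) ^ 2 = (α k) ^ 2 → j = k)
    (γ : ℝ) (hγ : ∀ j, γ ^ 2 ≠ (α j) ^ 2) (hpos : ∀ j, (α j) ^ 2 - γ ^ 2 > 0)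
    (p q : Fin N → ℝ) (b : ℝ) (hb : b ≠ 0) :
    let pt : Fin N → ℝ := fun j => (Real.sqrt ((α j) ^ 2 - γ ^ 2))⁻¹ * (α j * p j + γ * b * q j)
    let qt : Fin N → ℝ := fun j => (Real.sqrt ((α j) ^ 2 - γ ^ 2))⁻¹ * (γ * b⁻¹ * p j + α j * q j)
    let P : ℝ := b ^ 2 * Lax α γ p q 1 0 + 2 * b * Lax α γ p q 0 0 - Lax α γ p q 0 1
    ∀ lam : ℝ, (∀ j, lam ^ 2 ≠ (α j) ^ 2) →
      Lax α lam pt qt * Dmat γ lam b - Dmat γ lam b * Lax α lam p q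
        = (-(γ * b⁻¹ * P)) • σ3 := by
  intro pt qt P lam hlam
  have hd : ∀ j, lam ^ 2 - (α j) ^ 2 ≠ 0 := fun j => sub_ne_zero.mpr (hlam j)
  have hg : ∀ j, γ ^ 2 - (α j) ^ 2 ≠ 0 := fun j => sub_ne_zero.mpr (hγ j)
  have hterm : ∀ j, auxM α lam pt qt j * Dmat γ lam b - Dmat γ lam b * auxM α lam p q j
      = (-(γ * b⁻¹ * ((b ^ 2 * (α j * (q j * q j)) + 2 * b * (γ * (p j * q j))
          + α j * (p j * p j)) / (γ ^ 2 - (α j) ^ 2)))) • σ3 := fun j => by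
    rw [auxM, auxM]
    exact key_step (α j) γ lam b (p j) (q j) (pt j) (qt j) hb (hd j) (hg j) (hpos j) rfl rfl
  rw [lax_decomp α lam pt qt, lax_decomp α lam p q, add_mul, mul_add,
    show ∀ A B C D : Matrix (Fin 2) (Fin 2) ℝ, (A + B) - (C + D) = (A - C) + (B - D) from
      fun A B C D => by abel,
    Finset.sum_mul, Finset.mul_sum, ← Finset.sum_sub_distrib, ED_comm]
  simp only [hterm]
  rw [← Finset.sum_smul, ← add_smul]
  congr 1
  have e1 : ∑ j, (-(γ * b⁻¹ * ((b ^ 2 * (α j * (q j * q j)) + 2 * b * (γ * (p j * q j))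
      + α j * (p j * p j)) / (γ ^ 2 - (α j) ^ 2))))
      = -(γ * b⁻¹) * (b ^ 2 * (∑ j, α j * q j * q j / (γ ^ 2 - (α j) ^ 2))
        + 2 * b * γ * (∑ j, p j * q j / (γ ^ 2 - (α j) ^ 2))
        + (∑ j, α j * p j * p j / (γ ^ 2 - (α j) ^ 2))) := by
    simp only [mul_add, neg_mul, Finset.mul_sum, ← Finset.sum_add_distrib, neg_add,
      ← Finset.sum_neg_distrib]
    exact Finset.sum_congr rfl fun j _ => by ring
  rw [e1]
  simp only [P, Lax, Qlam, Matrix.of_apply, Matrix.cons_val', Matrix.cons_val_zero,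
    Matrix.cons_val_one, Matrix.head_cons, Matrix.empty_val', Matrix.cons_val_fin_one,
    Matrix.head_fin_const]
  ring
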